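/- Let G be a Tanner graph in which every variable node has degree ≥ γ ≥ 3, G is 4-cycle free, and every 8-cycle is chordless. Then the minimum distance of the associated code is at least 2γ; equivalently, every (a,0) trapping set (a set of a variable nodes inducing a subgraph with no odd-degree check node) satisfies a ≥ 2γ. -/

import Mathlib

set_option maxHeartbeats 2000000

open SimpleGraph Finset

/-- A cycle (given as a closed walk) in a graph has a chord if either there is an
edge of the graph between two vertices of the cycle that is not an edge of the cycle,
or there is a vertex outside the cycle adjacent to two distinct vertices of the cycle. -/
def HasChord {V : Type*} (G : SimpleGraph V) {v : V} (c : G.Walk v v) : Prop :=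
  (∃ x ∈ c.support, ∃ y ∈ c.support, G.Adj x y ∧ s(x, y) ∉ c.edges) ∨
  (∃ w, w ∉ c.support ∧ ∃ x ∈ c.support, ∃ y ∈ c.support, x ≠ y ∧ G.Adj w x ∧ G.Adj w y)

lemma no4aux {V : Type*} (G : SimpleGraph V)
    (h4 : ∀ (v : V) (c : G.Walk v v), c.IsCycle → c.length ≠ 4)
    {x y a b : V} (hxy : x ≠ y) (hab : a ≠ b)
    (h1 : G.Adj x a) (h2 : G.Adj a y) (h3 : G.Adj y b) (h4' : G.Adj b x) : False := by
  apply h4 x (Walk.cons h1 (Walk.cons h2 (Walk.cons h3 (Walk.cons h4' Walk.nil))))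
  · constructor
    · constructor
      · constructor
        simp [Walk.edges]
        aesop (add safe G.ne_of_adj)
      · simp
    · simp [Walk.support]
      aesop (add safe G.ne_of_adj)
  · simp

lemma chord8aux {V : Type*} (G : SimpleGraph V) (P : V → Prop)
    (hbip : ∀ x y, G.Adj x y → (P x ↔ ¬ P y))
    (h8 : ∀ (v : V) (c : G.Walk v v), c.IsCycle → c.length = 8 → ¬ HasChord G c)
    {v x u w f g d e c : V}
    (Pv : P v) (Px : P x) (Pu : P u) (Pw : P w)
    (hvx : v ≠ x) (hvu : v ≠ u) (hvw : v ≠ w) (hxu : x ≠ u) (hxw : x ≠ w) (huw : u ≠ w)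
    (hfg : f ≠ g) (hfd : f ≠ d) (hfe : f ≠ e) (hgd : g ≠ d) (hge : g ≠ e) (hde : d ≠ e)
    (hcf : c ≠ f) (hcg : c ≠ g) (hcd : c ≠ d) (hce : c ≠ e)
    (a1 : G.Adj v f) (a2 : G.Adj f x) (a3 : G.Adj x g) (a4 : G.Adj g u)
    (a5 : G.Adj u d) (a6 : G.Adj d w) (a7 : G.Adj w e) (a8 : G.Adj e v)
    (b1 : G.Adj c v) (b2 : G.Adj c u) : False := by
  have Pf : ¬ P f := (hbip v f a1).mp Pv
  have Pg : ¬ P g := (hbip x g a3).mp Px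
  have Pd : ¬ P d := (hbip u d a5).mp Pu
  have Pe : ¬ P e := (hbip w e a7).mp Pw
  have Pc : ¬ P c := fun hc => ((hbip c v b1).mp hc) Pv
  have cross : ∀ p q : V, P p → ¬ P q → p ≠ q := fun p q hp hq h => hq (h ▸ hp)
  have hvf := cross v f Pv Pf
  have hvg := cross v g Pv Pg
  have hvd := cross v d Pv Pd
  have hve := cross v e Pv Pe
  have hvc := cross v c Pv Pc
  have hxf := cross x f Px Pf
  have hxg := cross x g Px Pg
  have hxd := cross x d Px Pd
  have hxe := cross x e Px Pe
  have hxc := cross x c Px Pc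
  have huf := cross u f Pu Pf
  have hug := cross u g Pu Pg
  have hud := cross u d Pu Pd
  have hue := cross u e Pu Pe
  have huc := cross u c Pu Pc
  have hwf := cross w f Pw Pf
  have hwg := cross w g Pw Pg
  have hwd := cross w d Pw Pd
  have hwe := cross w e Pw Pe
  have hwc := cross w c Pw Pc
  set W : G.Walk v v := Walk.cons a1 (Walk.cons a2 (Walk.cons a3 (Walk.cons a4
    (Walk.cons a5 (Walk.cons a6 (Walk.cons a7 (Walk.cons a8 Walk.nil))))))) with hW
  have hcyc : W.IsCycle := by
    constructor
    · constructor
      · constructor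
        simp [hW, Walk.edges]
        aesop
      · simp [hW]
    · simp [hW, Walk.support]
      aesop
  apply h8 v W hcyc (by simp [hW])
  right
  refine ⟨c, ?_, v, ?_, u, ?_, hvu, b1, b2⟩ <;> simp [hW, Walk.support] <;> aesop

lemma partner_aux {V : Type*} [Fintype V] [DecidableEq V]
    (G : SimpleGraph V) [DecidableRel G.Adj]
    (isVar : V → Prop) [DecidablePred isVar]
    (hbip : ∀ x y, G.Adj x y → (isVar x ↔ ¬ isVar y))
    (S : Finset V) (hSvar : ∀ v ∈ S, isVar v)
    (heven : ∀ w, ¬ isVar w → Even ((S.filter (fun v => G.Adj w v)).card))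
    (f z p1 p2 p3 : V) (hz : z ∈ S) (hfz : G.Adj f z)
    (hbad : ∀ q1 q2, (q1 = p1 ∨ q1 = p2 ∨ q1 = p3) → (q2 = p1 ∨ q2 = p2 ∨ q2 = p3) →
      G.Adj f q1 → G.Adj f q2 → q1 = q2) :
    ∃ x, x ∈ S ∧ G.Adj f x ∧ x ≠ p1 ∧ x ≠ p2 ∧ x ≠ p3 := by
  have hnv : ¬ isVar f := fun h => ((hbip f z hfz).mp h) (hSvar z hz)
  have hzf : z ∈ S.filter (fun v => G.Adj f v) := mem_filter.mpr ⟨hz, hfz⟩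
  have hcard : 1 < (S.filter (fun v => G.Adj f v)).card := by
    obtain ⟨k, hk⟩ := heven f hnv
    have h0 : 0 < (S.filter (fun v => G.Adj f v)).card := card_pos.mpr ⟨z, hzf⟩
    omega
  obtain ⟨a, ha, b, hb, hab⟩ := Finset.one_lt_card.mp hcard
  rw [mem_filter] at ha hb
  by_cases hba : a = p1 ∨ a = p2 ∨ a = p3
  · refine ⟨b, hb.1, hb.2, ?_, ?_, ?_⟩ <;> intro h
    · exact hab (hbad a b hba (Or.inl h) ha.2 hb.2)
    · exact hab (hbad a b hba (Or.inr (Or.inl h)) ha.2 hb.2)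
    · exact hab (hbad a b hba (Or.inr (Or.inr h)) ha.2 hb.2)
  · push_neg at hba
    exact ⟨a, ha.1, ha.2, hba.1, hba.2.1, hba.2.2⟩

/-- Let `G` be a Tanner graph in which every variable node has degree `γ ≥ 3`,
with no 4-cycles and all 8-cycles chordless.  Then every nonempty `(a,0)` trapping
set (a set of `a` variable nodes such that every check node has an even number of
neighbours in it) satisfies `a ≥ 2γ`; hence the minimum distance is at least `2γ`. -/
theorem stmt_12 {V : Type*} [Fintype V] [DecidableEq V]
    (G : SimpleGraph V) [DecidableRel G.Adj]
    (isVar : V → Prop) [DecidablePred isVar]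
    (hbip : ∀ x y, G.Adj x y → (isVar x ↔ ¬ isVar y))
    (γ : ℕ) (hγ : 3 ≤ γ)
    (hdegV : ∀ v, isVar v → G.degree v = γ)
    (h4 : ∀ (v : V) (c : G.Walk v v), c.IsCycle → c.length ≠ 4)
    (h8 : ∀ (v : V) (c : G.Walk v v), c.IsCycle → c.length = 8 → ¬ HasChord G c)
    (S : Finset V) (hSvar : ∀ v ∈ S, isVar v) (hSne : S.Nonempty)
    (heven : ∀ w, ¬ isVar w → Even ((S.filter (fun v => G.Adj w v)).card)) :
    2 * γ ≤ S.card := by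
  have no4 : ∀ {x y a b : V}, x ≠ y → a ≠ b →
      G.Adj x a → G.Adj a y → G.Adj y b → G.Adj b x → False :=
    fun hxy hab h1 h2 h3 h4' => no4aux G h4 hxy hab h1 h2 h3 h4'
  by_cases hconf : ∃ v u w c d e : V, v ∈ S ∧ u ∈ S ∧ w ∈ S ∧ v ≠ u ∧ v ≠ w ∧ u ≠ w ∧
      c ≠ d ∧ c ≠ e ∧ d ≠ e ∧ G.Adj c v ∧ G.Adj c u ∧ G.Adj d u ∧ G.Adj d w ∧
      G.Adj e w ∧ G.Adj e v
  · -- Case 1 : a 6-cycle configuration exists; |S| ≥ 3γ-3 ≥ 2γ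
    obtain ⟨v, u, w, c, d, e, hv, hu, hw, hvu, hvw, huw, hcd, hce, hde,
      hcv, hcu, hdu, hdw, hew, hev⟩ := hconf
    set T : Finset V := ((G.neighborFinset v \ {c, e}) ∪ (G.neighborFinset u \ {c, d})) ∪
      (G.neighborFinset w \ {d, e}) with hTdef
    have hTfacts : ∀ f ∈ T, (f ≠ c ∧ f ≠ d ∧ f ≠ e) ∧
        ((G.Adj v f ∧ ¬G.Adj u f ∧ ¬G.Adj w f) ∨
         (G.Adj u f ∧ ¬G.Adj v f ∧ ¬G.Adj w f) ∨
         (G.Adj w f ∧ ¬G.Adj v f ∧ ¬G.Adj u f)) := by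
      intro f hf
      simp only [hTdef, mem_union, mem_sdiff, mem_neighborFinset, mem_insert,
        mem_singleton, not_or] at hf
      rcases hf with (⟨hfv, hfc, hfe⟩ | ⟨hfu, hfc, hfd⟩) | ⟨hfw, hfd, hfe⟩
      · have hfd : f ≠ d := by
          rintro rfl; exact no4 hvu hcd.symm hfv hdu hcu.symm hcv
        have hnu : ¬ G.Adj u f := fun h =>
          no4 hvu hfc hfv h.symm hcu.symm hcv
        have hnw : ¬ G.Adj w f := fun h =>
          no4 hvw hfe hfv h.symm hew.symm hev
        exact ⟨⟨hfc, hfd, hfe⟩, Or.inl ⟨hfv, hnu, hnw⟩⟩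
      · have hfe : f ≠ e := by
          rintro rfl; exact no4 huw (Ne.symm hde) hfu hew hdw.symm hdu
        have hnv : ¬ G.Adj v f := fun h =>
          no4 (Ne.symm hvu) hfc hfu h.symm hcv.symm hcu
        have hnw : ¬ G.Adj w f := fun h =>
          no4 huw hfd hfu h.symm hdw.symm hdu
        exact ⟨⟨hfc, hfd, hfe⟩, Or.inr (Or.inl ⟨hfu, hnv, hnw⟩)⟩
      · have hfc : f ≠ c := by
          rintro rfl; exact no4 (Ne.symm hvw) hce hfw hcv hev.symm hew
        have hnv : ¬ G.Adj v f := fun h =>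
          no4 (Ne.symm hvw) hfe hfw h.symm hev.symm hew
        have hnu : ¬ G.Adj u f := fun h =>
          no4 (Ne.symm huw) hfd hfw h.symm hdu.symm hdw
        exact ⟨⟨hfc, hfd, hfe⟩, Or.inr (Or.inr ⟨hfw, hnv, hnu⟩)⟩
    have hex : ∀ f : V, ∃ x : V, f ∈ T → x ∈ S ∧ G.Adj f x ∧ x ≠ v ∧ x ≠ u ∧ x ≠ w := by
      intro f
      by_cases hf : f ∈ T
      · obtain ⟨_, hown⟩ := hTfacts f hf
        have hbad : ∀ q1 q2, (q1 = v ∨ q1 = u ∨ q1 = w) → (q2 = v ∨ q2 = u ∨ q2 = w) →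
            G.Adj f q1 → G.Adj f q2 → q1 = q2 := by
          intro q1 q2 h1 h2 a1 a2
          rcases hown with ⟨hA, hB, hC⟩ | ⟨hA, hB, hC⟩ | ⟨hA, hB, hC⟩ <;>
            rcases h1 with rfl | rfl | rfl <;> rcases h2 with rfl | rfl | rfl <;>
            first
              | rfl
              | (exact absurd a1.symm (by assumption))
              | (exact absurd a2.symm (by assumption))
        rcases hown with ⟨hA, _, _⟩ | ⟨hA, _, _⟩ | ⟨hA, _, _⟩
        · obtain ⟨x, hx⟩ := partner_aux G isVar hbip S hSvar heven f v v u w hv hA.symm hbad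
          exact ⟨x, fun _ => hx⟩
        · obtain ⟨x, hx⟩ := partner_aux G isVar hbip S hSvar heven f u v u w hu hA.symm hbad
          exact ⟨x, fun _ => hx⟩
        · obtain ⟨x, hx⟩ := partner_aux G isVar hbip S hSvar heven f w v u w hw hA.symm hbad
          exact ⟨x, fun _ => hx⟩
      · exact ⟨v, fun h => absurd h hf⟩
    choose p hp using hex
    have hvVar := hSvar v hv
    have huVar := hSvar u hu
    have hwVar := hSvar w hw
    have hinj : Set.InjOn p ↑T := by
      intro f hf g hg hpfg
      by_contra hne
      have hfT : f ∈ T := hf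
      have hgT : g ∈ T := hg
      obtain ⟨hzS, hzadj, hz1, hz2, hz3⟩ := hp f hfT
      obtain ⟨hzS', hzadj', _, _, _⟩ := hp g hgT
      have hzg : G.Adj g (p f) := hpfg ▸ hzadj'
      obtain ⟨⟨hfc, hfd, hfe⟩, hfown⟩ := hTfacts f hfT
      obtain ⟨⟨hgc, hgd, hge⟩, hgown⟩ := hTfacts g hgT
      have hzvar : isVar (p f) := hSvar _ hzS
      rcases hfown with ⟨hfv, _, _⟩ | ⟨hfu, _, _⟩ | ⟨hfw, _, _⟩ <;>
        rcases hgown with ⟨hgv, _, _⟩ | ⟨hgu, _, _⟩ | ⟨hgw, _, _⟩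
      · exact no4 hz1 hne hzadj.symm hfv.symm hgv hzg
      · exact chord8aux G isVar hbip h8 hvVar hzvar huVar hwVar
          (Ne.symm hz1) hvu hvw hz2 hz3 huw
          hne hfd hfe hgd hge hde (Ne.symm hfc) (Ne.symm hgc) hcd hce
          hfv hzadj hzg.symm hgu.symm hdu.symm hdw hew.symm hev hcv hcu
      · exact chord8aux G isVar hbip h8 hvVar hzvar hwVar huVar
          (Ne.symm hz1) hvw hvu hz3 hz2 (Ne.symm huw)
          hne hfd hfc hgd hgc (Ne.symm hcd)
          (Ne.symm hfe) (Ne.symm hge) (Ne.symm hde) (Ne.symm hce)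
          hfv hzadj hzg.symm hgw.symm hdw.symm hdu hcu.symm hcv hev hew
      · exact chord8aux G isVar hbip h8 hvVar hzvar huVar hwVar
          (Ne.symm hz1) hvu hvw hz2 hz3 huw
          (Ne.symm hne) hgd hge hfd hfe hde (Ne.symm hgc) (Ne.symm hfc) hcd hce
          hgv hzg hzadj.symm hfu.symm hdu.symm hdw hew.symm hev hcv hcu
      · exact no4 hz2 hne hzadj.symm hfu.symm hgu hzg
      · exact chord8aux G isVar hbip h8 huVar hzvar hwVar hvVar
          (Ne.symm hz2) huw (Ne.symm hvu) hz3 hz1 (Ne.symm hvw)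
          hne hfe hfc hge hgc (Ne.symm hce)
          (Ne.symm hfd) (Ne.symm hgd) hde (Ne.symm hcd)
          hfu hzadj hzg.symm hgw.symm hew.symm hev hcv.symm hcu hdu hdw
      · exact chord8aux G isVar hbip h8 hvVar hzvar hwVar huVar
          (Ne.symm hz1) hvw hvu hz3 hz2 (Ne.symm huw)
          (Ne.symm hne) hgd hgc hfd hfc (Ne.symm hcd)
          (Ne.symm hge) (Ne.symm hfe) (Ne.symm hde) (Ne.symm hce)
          hgv hzg hzadj.symm hfw.symm hdw.symm hdu hcu.symm hcv hev hew
      · exact chord8aux G isVar hbip h8 huVar hzvar hwVar hvVar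
          (Ne.symm hz2) huw (Ne.symm hvu) hz3 hz1 (Ne.symm hvw)
          (Ne.symm hne) hge hgc hfe hfc (Ne.symm hce)
          (Ne.symm hgd) (Ne.symm hfd) hde (Ne.symm hcd)
          hgu hzg hzadj.symm hfw.symm hew.symm hev hcv.symm hcu hdu hdw
      · exact no4 hz3 hne hzadj.symm hfw.symm hgw hzg
    have hTcard : T.card = 3 * (γ - 2) := by
      have hdv : (G.neighborFinset v).card = γ := hdegV v hvVar
      have hdu' : (G.neighborFinset u).card = γ := hdegV u huVar
      have hdw' : (G.neighborFinset w).card = γ := hdegV w hwVar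
      have hsub1 : ({c, e} : Finset V) ⊆ G.neighborFinset v := by
        intro x hx; simp only [mem_insert, mem_singleton] at hx
        rcases hx with rfl | rfl <;> rw [mem_neighborFinset]
        exacts [hcv.symm, hev.symm]
      have hsub2 : ({c, d} : Finset V) ⊆ G.neighborFinset u := by
        intro x hx; simp only [mem_insert, mem_singleton] at hx
        rcases hx with rfl | rfl <;> rw [mem_neighborFinset]
        exacts [hcu.symm, hdu.symm]
      have hsub3 : ({d, e} : Finset V) ⊆ G.neighborFinset w := by
        intro x hx; simp only [mem_insert, mem_singleton] at hx
        rcases hx with rfl | rfl <;> rw [mem_neighborFinset]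
        exacts [hdw.symm, hew.symm]
      have hc1 : (G.neighborFinset v \ {c, e}).card = γ - 2 := by
        rw [card_sdiff_of_subset hsub1, hdv, card_insert_of_notMem (by simp [hce]), card_singleton]
      have hc2 : (G.neighborFinset u \ {c, d}).card = γ - 2 := by
        rw [card_sdiff_of_subset hsub2, hdu', card_insert_of_notMem (by simp [hcd]), card_singleton]
      have hc3 : (G.neighborFinset w \ {d, e}).card = γ - 2 := by
        rw [card_sdiff_of_subset hsub3, hdw', card_insert_of_notMem (by simp [hde]), card_singleton]
      have hd12 : Disjoint (G.neighborFinset v \ {c, e}) (G.neighborFinset u \ {c, d}) := by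
        rw [Finset.disjoint_left]
        intro f hf1 hf2
        simp only [mem_sdiff, mem_neighborFinset, mem_insert, mem_singleton, not_or] at hf1 hf2
        exact no4 hvu hf1.2.1 hf1.1 hf2.1.symm hcu.symm hcv
      have hd13 : Disjoint ((G.neighborFinset v \ {c, e}) ∪ (G.neighborFinset u \ {c, d}))
          (G.neighborFinset w \ {d, e}) := by
        rw [Finset.disjoint_left]
        intro f hf1 hf3
        simp only [mem_union, mem_sdiff, mem_neighborFinset, mem_insert, mem_singleton,
          not_or] at hf1 hf3
        rcases hf1 with ⟨hfv, _, hfe⟩ | ⟨hfu, _, hfd⟩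
        · exact no4 hvw hfe hfv hf3.1.symm hew.symm hev
        · exact no4 huw hfd hfu hf3.1.symm hdw.symm hdu
      rw [hTdef, card_union_of_disjoint hd13, card_union_of_disjoint hd12, hc1, hc2, hc3]
      ring
    have hsub : ({v, u, w} : Finset V) ∪ T.image p ⊆ S := by
      intro x hx
      rcases mem_union.mp hx with h | h
      · simp only [mem_insert, mem_singleton] at h
        rcases h with rfl | rfl | rfl <;> assumption
      · obtain ⟨f, hf, rfl⟩ := mem_image.mp h
        exact (hp f hf).1
    have hdisj : Disjoint ({v, u, w} : Finset V) (T.image p) := by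
      rw [disjoint_right]
      intro x hx hx2
      obtain ⟨f, hf, rfl⟩ := mem_image.mp hx
      obtain ⟨_, _, h1, h2, h3⟩ := hp f hf
      simp only [mem_insert, mem_singleton] at hx2
      rcases hx2 with rfl | rfl | rfl
      exacts [h1 rfl, h2 rfl, h3 rfl]
    have hvuw : ({v, u, w} : Finset V).card = 3 := by
      rw [card_insert_of_notMem (by simp [hvu, hvw]),
        card_insert_of_notMem (by simp [huw]), card_singleton]
    have himg : (T.image p).card = T.card := Finset.card_image_of_injOn hinj
    have := Finset.card_le_card hsub
    rw [card_union_of_disjoint hdisj, hvuw, himg, hTcard] at this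
    omega
  · -- Case 2 : no 6-cycle configuration; |S| ≥ 2γ
    obtain ⟨v, hv⟩ := hSne
    have hvVar := hSvar v hv
    have hdv : (G.neighborFinset v).card = γ := hdegV v hvVar
    obtain ⟨c1, hc1m⟩ := card_pos.mp (by rw [hdv]; omega : 0 < (G.neighborFinset v).card)
    have hc1 : G.Adj v c1 := (mem_neighborFinset G v c1).mp hc1m
    obtain ⟨u, huS, hc1u, hune, -, -⟩ :=
      partner_aux G isVar hbip S hSvar heven c1 v v v v hv hc1.symm
        (by intro q1 q2 h1 h2 _ _; rcases h1 with rfl | rfl | rfl <;>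
            rcases h2 with rfl | rfl | rfl <;> rfl)
    have huVar := hSvar u huS
    set T : Finset V := (G.neighborFinset v \ {c1}) ∪ (G.neighborFinset u \ {c1}) with hTdef
    have hTfacts : ∀ f ∈ T, f ≠ c1 ∧
        ((G.Adj v f ∧ ¬G.Adj u f) ∨ (G.Adj u f ∧ ¬G.Adj v f)) := by
      intro f hf
      simp only [hTdef, mem_union, mem_sdiff, mem_neighborFinset, mem_singleton] at hf
      rcases hf with ⟨hfv, hfc⟩ | ⟨hfu, hfc⟩
      · exact ⟨hfc, Or.inl ⟨hfv, fun h => no4 (Ne.symm hune) hfc hfv h.symm hc1u.symm hc1.symm⟩⟩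
      · exact ⟨hfc, Or.inr ⟨hfu, fun h => no4 hune hfc hfu h.symm hc1 hc1u⟩⟩
    have hex : ∀ f : V, ∃ x : V, f ∈ T → x ∈ S ∧ G.Adj f x ∧ x ≠ v ∧ x ≠ u := by
      intro f
      by_cases hf : f ∈ T
      · obtain ⟨_, hown⟩ := hTfacts f hf
        have hbad : ∀ q1 q2, (q1 = v ∨ q1 = u ∨ q1 = u) → (q2 = v ∨ q2 = u ∨ q2 = u) →
            G.Adj f q1 → G.Adj f q2 → q1 = q2 := by
          intro q1 q2 h1 h2 a1 a2
          rcases hown with ⟨hA, hB⟩ | ⟨hA, hB⟩ <;>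
            rcases h1 with rfl | rfl | rfl <;> rcases h2 with rfl | rfl | rfl <;>
            first
              | rfl
              | (exact absurd a1.symm (by assumption))
              | (exact absurd a2.symm (by assumption))
        rcases hown with ⟨hA, _⟩ | ⟨hA, _⟩
        · obtain ⟨x, h1, h2, h3, h4', -⟩ :=
            partner_aux G isVar hbip S hSvar heven f v v u u hv hA.symm hbad
          exact ⟨x, fun _ => ⟨h1, h2, h3, h4'⟩⟩
        · obtain ⟨x, h1, h2, h3, h4', -⟩ :=
            partner_aux G isVar hbip S hSvar heven f u v u u huS hA.symm hbad
          exact ⟨x, fun _ => ⟨h1, h2, h3, h4'⟩⟩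
      · exact ⟨v, fun h => absurd h hf⟩
    choose p hp using hex
    have hinj : Set.InjOn p ↑T := by
      intro f hf g hg hpfg
      by_contra hne
      have hfT : f ∈ T := hf
      have hgT : g ∈ T := hg
      obtain ⟨hzS, hzadj, hz1, hz2⟩ := hp f hfT
      obtain ⟨hzS', hzadj', -, -⟩ := hp g hgT
      have hzg : G.Adj g (p f) := hpfg ▸ hzadj'
      obtain ⟨hfc, hfown⟩ := hTfacts f hfT
      obtain ⟨hgc, hgown⟩ := hTfacts g hgT
      rcases hfown with ⟨hfv, _⟩ | ⟨hfu, _⟩ <;> rcases hgown with ⟨hgv, _⟩ | ⟨hgu, _⟩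
      · exact no4 hz1 hne hzadj.symm hfv.symm hgv hzg
      · exact hconf ⟨v, u, p f, c1, g, f, hv, huS, hzS, Ne.symm hune, Ne.symm hz1,
          Ne.symm hz2, Ne.symm hgc, Ne.symm hfc, Ne.symm hne, hc1.symm, hc1u,
          hgu.symm, hzg, hzadj, hfv.symm⟩
      · exact hconf ⟨v, u, p f, c1, f, g, hv, huS, hzS, Ne.symm hune, Ne.symm hz1,
          Ne.symm hz2, Ne.symm hfc, Ne.symm hgc, hne, hc1.symm, hc1u,
          hfu.symm, hzadj, hzg, hgv.symm⟩
      · exact no4 hz2 hne hzadj.symm hfu.symm hgu hzg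
    have hTcard : T.card = 2 * (γ - 1) := by
      have hdu' : (G.neighborFinset u).card = γ := hdegV u huVar
      have hs1 : ({c1} : Finset V) ⊆ G.neighborFinset v := by
        intro x hx; rw [mem_singleton] at hx; subst hx
        exact (mem_neighborFinset G v _).mpr hc1
      have hs2 : ({c1} : Finset V) ⊆ G.neighborFinset u := by
        intro x hx; rw [mem_singleton] at hx; subst hx
        exact (mem_neighborFinset G u _).mpr hc1u.symm
      have hd : Disjoint (G.neighborFinset v \ {c1}) (G.neighborFinset u \ {c1}) := by
        rw [Finset.disjoint_left]
        intro f hf1 hf2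
        simp only [mem_sdiff, mem_neighborFinset, mem_singleton] at hf1 hf2
        exact no4 (Ne.symm hune) hf1.2 hf1.1 hf2.1.symm hc1u.symm hc1.symm
      rw [hTdef, card_union_of_disjoint hd, card_sdiff_of_subset hs1, card_sdiff_of_subset hs2, hdv, hdu',
        card_singleton]
      omega
    have hsub : ({v, u} : Finset V) ∪ T.image p ⊆ S := by
      intro x hx
      rcases mem_union.mp hx with h | h
      · simp only [mem_insert, mem_singleton] at h
        rcases h with rfl | rfl <;> assumption
      · obtain ⟨f, hf, rfl⟩ := mem_image.mp h
        exact (hp f hf).1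
    have hdisj : Disjoint ({v, u} : Finset V) (T.image p) := by
      rw [disjoint_right]
      intro x hx hx2
      obtain ⟨f, hf, rfl⟩ := mem_image.mp hx
      obtain ⟨_, _, h1, h2⟩ := hp f hf
      simp only [mem_insert, mem_singleton] at hx2
      rcases hx2 with rfl | rfl
      exacts [h1 rfl, h2 rfl]
    have hvu2 : ({v, u} : Finset V).card = 2 := by
      rw [card_insert_of_notMem (by simp [Ne.symm hune]), card_singleton]
    have himg : (T.image p).card = T.card := Finset.card_image_of_injOn hinj
    have := Finset.card_le_card hsub
    rw [card_union_of_disjoint hdisj, hvu2, himg, hTcard] at this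
    omega
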